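/- Let F be a free group with basis {g_j | j ∈ J}, K ⊆ J, F_K the subgroup generated by {g_j | j ∈ K}, N a normal subgroup of F, and suppose v ∈ F satisfies D_k(v) ≡ 0 mod ℤ[F]·(N−1) for every k ∈ J \ K. Then v and 1 lie in the same right coset of the subgroup F_K·N, i.e., there exists v̂ ∈ F_K with v·v̂⁻¹ ∈ N. -/

import Mathlib

open scoped Classical
open scoped Pointwise

/-- The augmentation map `ℤ[F] → ℤ` induced by the trivial homomorphism `F → 1`. -/
noncomputable def aug (J : Type) : MonoidAlgebra ℤ (FreeGroup J) →ₐ[ℤ] ℤ :=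
  MonoidAlgebra.lift ℤ ℤ (FreeGroup J) 1

/-- `D` is the Fox derivative of `ℤ[F]` with respect to the generator `g_k`:
it is ℤ-linear, satisfies `D(uv) = D(u)v + ε(u)D(v)`, and sends `g_j` to `δ_{kj}`. -/
def IsFoxDerivative {J : Type} (k : J)
    (D : MonoidAlgebra ℤ (FreeGroup J) →ₗ[ℤ] MonoidAlgebra ℤ (FreeGroup J)) : Prop :=
  (∀ u v : MonoidAlgebra ℤ (FreeGroup J), D (u * v) = D u * v + (aug J u) • D v) ∧
  (∀ j : J, D (MonoidAlgebra.of ℤ (FreeGroup J) (FreeGroup.of j)) = if k = j then 1 else 0)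

/-- The ideal `ℤ[F]·(N−1)` of `ℤ[F]` generated by the elements `n − 1`, `n ∈ N`. -/
noncomputable def NIdeal {J : Type} (N : Subgroup (FreeGroup J)) :
    Submodule ℤ (MonoidAlgebra ℤ (FreeGroup J)) :=
  Submodule.span ℤ {a | ∃ u : MonoidAlgebra ℤ (FreeGroup J), ∃ n ∈ N,
    a = u * (MonoidAlgebra.of ℤ (FreeGroup J) n - 1)}

/-- The ideal `d·ℤ[F]` of multiples of the integer `d`. -/
noncomputable def dIdeal {J : Type} (d : ℤ) : Submodule ℤ (MonoidAlgebra ℤ (FreeGroup J)) :=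
  Submodule.span ℤ {a | ∃ u : MonoidAlgebra ℤ (FreeGroup J), a = d • u}

section FoxAux

variable {J : Type}

lemma aug_of (w : FreeGroup J) : aug J (MonoidAlgebra.of ℤ (FreeGroup J) w) = 1 := by
  simp [aug]

lemma fox_D_one {k : J} {D : MonoidAlgebra ℤ (FreeGroup J) →ₗ[ℤ] MonoidAlgebra ℤ (FreeGroup J)}
    (h : IsFoxDerivative k D) : D 1 = 0 := by
  have h1 := h.1 1 1
  simp only [mul_one, map_one, one_smul] at h1
  exact left_eq_add.mp h1

/-- `NIdeal` is a left ideal. -/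
lemma NIdeal_mul_left {N : Subgroup (FreeGroup J)} (r x : MonoidAlgebra ℤ (FreeGroup J))
    (hx : x ∈ NIdeal N) : r * x ∈ NIdeal N := by
  induction hx using Submodule.span_induction with
  | mem a ha =>
    obtain ⟨u, n, hn, rfl⟩ := ha
    exact Submodule.subset_span ⟨r * u, n, hn, by rw [mul_assoc]⟩
  | zero => simp
  | add a b _ _ ha hb => simpa [mul_add] using Submodule.add_mem _ ha hb
  | smul c a _ ha => rw [mul_smul_comm]; exact Submodule.smul_mem _ c ha

/-- The fundamental Fox formula with finite support. -/
lemma fox_sum (D : J → (MonoidAlgebra ℤ (FreeGroup J) →ₗ[ℤ] MonoidAlgebra ℤ (FreeGroup J)))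
    (hD : ∀ j, IsFoxDerivative j (D j)) (v : FreeGroup J) :
    ∃ s : Finset J, (∀ j ∉ s, D j (MonoidAlgebra.of ℤ (FreeGroup J) v) = 0) ∧
      MonoidAlgebra.of ℤ (FreeGroup J) v - 1 =
        ∑ j ∈ s, (MonoidAlgebra.of ℤ (FreeGroup J) (FreeGroup.of j) - 1) *
          D j (MonoidAlgebra.of ℤ (FreeGroup J) v) := by
  set oF := MonoidAlgebra.of ℤ (FreeGroup J) with hoF
  induction v using FreeGroup.induction_on with
  | C1 =>
    refine ⟨∅, ?_, ?_⟩
    · intro j _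
      simpa using fox_D_one (hD j)
    · simp
  | of x =>
    have hp : (pure x : FreeGroup J) = FreeGroup.of x := rfl
    refine ⟨{x}, ?_, ?_⟩
    · intro j hj
      rw [hoF, (hD j).2 x, if_neg (by simpa using hj)]
    · rw [hoF, Finset.sum_singleton, (hD x).2 x, if_pos rfl, mul_one]
  | inv_of x _ =>
    have hp : (pure x : FreeGroup J) = FreeGroup.of x := rfl
    have key : ∀ j, D j (oF (FreeGroup.of x)⁻¹) =
        if j = x then -(oF (FreeGroup.of x)⁻¹) else 0 := by
      intro j
      have h1 := (hD j).1 (oF (FreeGroup.of x)) (oF (FreeGroup.of x)⁻¹)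
      rw [← map_mul, mul_inv_cancel, map_one, fox_D_one (hD j), (hD j).2 x, aug_of,
        one_smul] at h1
      by_cases hjx : j = x
      · subst hjx
        rw [if_pos rfl] at h1 ⊢
        rw [one_mul] at h1
        exact eq_neg_of_add_eq_zero_right h1.symm
      · rw [if_neg hjx] at h1
        rw [if_neg hjx]
        rw [zero_mul, zero_add] at h1
        exact h1.symm
    refine ⟨{x}, ?_, ?_⟩
    · intro j hj
      rw [key j,
        if_neg (by simpa using hj)]
    · rw [Finset.sum_singleton, key x, if_pos rfl]
      have : oF (FreeGroup.of x) * oF (FreeGroup.of x)⁻¹ = 1 := by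
        rw [← map_mul, mul_inv_cancel, map_one]
      rw [mul_neg, sub_mul, one_mul, this]
      abel
  | mul x y ihx ihy =>
    obtain ⟨sx, hx0, hx⟩ := ihx
    obtain ⟨sy, hy0, hy⟩ := ihy
    have hmul : ∀ j, D j (oF (x * y)) = D j (oF x) * oF y + D j (oF y) := by
      intro j
      rw [map_mul, (hD j).1, aug_of, one_smul]
    refine ⟨sx ∪ sy, ?_, ?_⟩
    · intro j hj
      rw [hmul j, hx0 j (fun h => hj (Finset.mem_union_left _ h)),
        hy0 j (fun h => hj (Finset.mem_union_right _ h)), zero_mul, zero_add]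
    · have e1 : ∑ j ∈ sx ∪ sy, (oF (FreeGroup.of j) - 1) * D j (oF x) =
          ∑ j ∈ sx, (oF (FreeGroup.of j) - 1) * D j (oF x) := by
        refine (Finset.sum_subset Finset.subset_union_left ?_).symm
        intro j _ hj
        rw [hx0 j hj, mul_zero]
      have e2 : ∑ j ∈ sx ∪ sy, (oF (FreeGroup.of j) - 1) * D j (oF y) =
          ∑ j ∈ sy, (oF (FreeGroup.of j) - 1) * D j (oF y) := by
        refine (Finset.sum_subset Finset.subset_union_right ?_).symm
        intro j _ hj
        rw [hy0 j hj, mul_zero]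
      calc oF (x * y) - 1 = (oF x - 1) * oF y + (oF y - 1) := by
            rw [map_mul, sub_mul, one_mul]; abel
        _ = (∑ j ∈ sx, (oF (FreeGroup.of j) - 1) * D j (oF x)) * oF y
              + ∑ j ∈ sy, (oF (FreeGroup.of j) - 1) * D j (oF y) := by rw [← hx, ← hy]
        _ = ∑ j ∈ sx ∪ sy, ((oF (FreeGroup.of j) - 1) * D j (oF x) * oF y
              + (oF (FreeGroup.of j) - 1) * D j (oF y)) := by
            rw [Finset.sum_add_distrib, ← Finset.sum_mul, e1, e2]
        _ = ∑ j ∈ sx ∪ sy, (oF (FreeGroup.of j) - 1) * D j (oF (x * y)) := by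
            refine Finset.sum_congr rfl fun j _ => ?_
            rw [hmul j, mul_add, mul_assoc]

end FoxAux

/-- If `D_k(v) ≡ 0 mod ℤ[F]·(N−1)` for all `k ∈ J \ K`, then `v` and `1` lie in the same
right coset of `F_K·N`: there is `v̂ ∈ F_K` with `v·v̂⁻¹ ∈ N`. -/
theorem coset_of_fox_congruence {J : Type} (K : Set J) (N : Subgroup (FreeGroup J))
    (hN : N.Normal)
    (D : J → (MonoidAlgebra ℤ (FreeGroup J) →ₗ[ℤ] MonoidAlgebra ℤ (FreeGroup J)))
    (hD : ∀ j, IsFoxDerivative j (D j)) (v : FreeGroup J)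
    (hv : ∀ k, k ∉ K → D k (MonoidAlgebra.of ℤ (FreeGroup J) v) ∈ NIdeal N) :
    ∃ vhat ∈ Subgroup.closure (FreeGroup.of '' K), v * vhat⁻¹ ∈ N := by
  classical
  let F := FreeGroup J
  set oF := MonoidAlgebra.of ℤ (FreeGroup J) with hoF
  set FK := Subgroup.closure (FreeGroup.of '' K) with hFK
  set H := FK ⊔ N with hH
  -- the coset space H\F and the linear coset map
  let q : F → Quotient (QuotientGroup.rightRel H) := Quotient.mk _
  let σ : MonoidAlgebra ℤ F →ₗ[ℤ] (Quotient (QuotientGroup.rightRel H) →₀ ℤ) :=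
    Finsupp.lmapDomain ℤ ℤ q ∘ₗ (MonoidAlgebra.coeffLinearEquiv ℤ).toLinearMap
  -- q is invariant under left multiplication by elements of H
  have hq : ∀ h ∈ H, ∀ a : F, q (h * a) = q a := by
    intro h hh a
    exact Quotient.sound (QuotientGroup.rightRel_apply.mpr (by simp only [mul_inv_rev, mul_inv_cancel_left]; exact H.inv_mem hh))
  -- auxiliary: multiplication by a single group element as mapDomain
  have mul_of_eq : ∀ (f : MonoidAlgebra ℤ F) (g : F),
      f * oF g = MonoidAlgebra.mapDomain (· * g) f := by
    intro f g
    induction f using MonoidAlgebra.induction_linear with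
    | zero => simp [MonoidAlgebra.mapDomain_zero]
    | add a b ha hb => rw [add_mul, ha, hb, MonoidAlgebra.mapDomain_add]
    | single a b =>
      rw [MonoidAlgebra.mapDomain_single]
      show MonoidAlgebra.single a b * MonoidAlgebra.single g 1 = _
      rw [MonoidAlgebra.single_mul_single, mul_one]
  have of_mul_eq : ∀ (g : F) (f : MonoidAlgebra ℤ F),
      oF g * f = MonoidAlgebra.mapDomain (g * ·) f := by
    intro g f
    induction f using MonoidAlgebra.induction_linear with
    | zero => simp [MonoidAlgebra.mapDomain_zero]
    | add a b ha hb => rw [mul_add, ha, hb, MonoidAlgebra.mapDomain_add]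
    | single a b =>
      rw [MonoidAlgebra.mapDomain_single]
      show MonoidAlgebra.single g 1 * MonoidAlgebra.single a b = _
      rw [MonoidAlgebra.single_mul_single, one_mul]
  -- σ kills the ideal ℤ[F]·(N−1)
  have hσN : ∀ x ∈ NIdeal N, σ x = 0 := by
    intro x hx
    induction hx using Submodule.span_induction with
    | mem a ha =>
      obtain ⟨u, n, hn, rfl⟩ := ha
      rw [mul_sub, mul_one, map_sub, mul_of_eq]
      show Finsupp.mapDomain q (Finsupp.mapDomain (· * n) u.coeff) - Finsupp.mapDomain q u.coeff = 0
      rw [← Finsupp.mapDomain_comp]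
      have : (q ∘ (· * n)) = q := by
        funext a
        show q (a * n) = q a
        refine Quotient.sound (QuotientGroup.rightRel_apply.mpr ?_)
        have he : a * (a * n)⁻¹ = a * n⁻¹ * a⁻¹ := by rw [mul_inv_rev, mul_assoc]
        rw [he]
        exact (le_sup_right : N ≤ H) (hN.conj_mem _ (N.inv_mem hn) a)
      rw [this, sub_self]
    | zero => simp
    | add a b _ _ ha hb => rw [map_add, ha, hb, add_zero]
    | smul c a _ ha => rw [map_smul, ha, smul_zero]
  -- σ kills (g_k − 1)·x for k ∈ K
  have hσK : ∀ k ∈ K, ∀ x : MonoidAlgebra ℤ F,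
      σ ((oF (FreeGroup.of k) - 1) * x) = 0 := by
    intro k hk x
    rw [sub_mul, one_mul, map_sub, of_mul_eq]
    show Finsupp.mapDomain q (Finsupp.mapDomain (FreeGroup.of k * ·) x.coeff)
      - Finsupp.mapDomain q x.coeff = 0
    rw [← Finsupp.mapDomain_comp]
    have hkH : (FreeGroup.of k : F) ∈ H :=
      (le_sup_left : FK ≤ H) (Subgroup.subset_closure ⟨k, hk, rfl⟩)
    have : (q ∘ (FreeGroup.of k * ·)) = q := by
      funext a
      exact hq _ hkH a
    rw [this, sub_self]
  -- the Fox fundamental formula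
  obtain ⟨s, hs0, hs⟩ := fox_sum D hD v
  -- split the sum
  have hsplit : oF v - 1 =
      (∑ j ∈ s.filter (· ∈ K), (oF (FreeGroup.of j) - 1) * D j (oF v))
      + ∑ j ∈ s.filter (¬ · ∈ K), (oF (FreeGroup.of j) - 1) * D j (oF v) := by
    rw [hs, Finset.sum_filter_add_sum_filter_not]
  -- apply σ
  have hσv : σ (oF v) - σ 1 = 0 := by
    have := congrArg σ hsplit
    rw [map_sub, map_add] at this
    rw [this, map_sum, map_sum]
    have z1 : ∀ j ∈ s.filter (· ∈ K),
        σ ((oF (FreeGroup.of j) - 1) * D j (oF v)) = 0 := by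
      intro j hj
      exact hσK j (Finset.mem_filter.mp hj).2 _
    have z2 : ∀ j ∈ s.filter (¬ · ∈ K),
        σ ((oF (FreeGroup.of j) - 1) * D j (oF v)) = 0 := by
      intro j hj
      refine hσN _ ?_
      exact NIdeal_mul_left _ _ (hv j (Finset.mem_filter.mp hj).2)
    rw [Finset.sum_eq_zero z1, Finset.sum_eq_zero z2, add_zero]
  -- conclude q v = q 1
  have hone : (1 : MonoidAlgebra ℤ F) = oF 1 := (map_one oF).symm
  have hqs : ∀ w : F, σ (oF w) = Finsupp.single (q w) 1 := by
    intro w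
    show Finsupp.mapDomain q (Finsupp.single w 1) = _
    rw [Finsupp.mapDomain_single]
  rw [hone, hqs, hqs, sub_eq_zero] at hσv
  have hqv : q v = q 1 := by
    rcases (Finsupp.single_eq_single_iff _ _ _ _).mp hσv with ⟨h, _⟩ | ⟨h, _⟩
    · exact h
    · exact absurd h one_ne_zero
  have hvH : v ∈ H := by
    have h2 := QuotientGroup.rightRel_apply.mp (Quotient.exact hqv)
    simpa using H.inv_mem h2
  -- decompose v = h * n with h ∈ FK, n ∈ N
  have hd : v ∈ (FK : Set (FreeGroup J)) * (N : Set (FreeGroup J)) := by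
    rw [← Subgroup.mul_normal FK N]
    exact hvH
  obtain ⟨h, hh, n, hn, rfl⟩ := hd
  exact ⟨h, hh, by simpa [mul_assoc] using (hN.conj_mem n hn h)⟩
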